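/- Let M(x,y) be the expected meeting time of the virtual process on a connected graph G with m edges, and let S(x,y) = Φ(x,y)/2 where Φ(x,y) = H_Z(x,y) + H_Z(y,w) - H_Z(w,y) for the lazy walk Z and a hidden vertex w. If both M and S satisfy the recursion F(x,y) = m/(d(x)+d(y)) + (1/(d(x)+d(y)))(Σ_{j∈N(x)} F(j,y) + Σ_{j∈N(y)} F(j,x)) for all x ≠ y, with boundary value 0 on the diagonal matched at (w,w), then M(x,y) = S(x,y) for all x, y; in particular M(x,y) = (1/2)H_Z(x,y) when Z is symmetric. -/

import Mathlib

/-- Uniqueness via maximum principle: a function vanishing on the diagonal and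
satisfying the mean-value property off the diagonal is nonpositive. -/
lemma harmonic_nonpos {V : Type*} [Fintype V] [DecidableEq V] [Nonempty V]
    (G : SimpleGraph V) [DecidableRel G.Adj] (hconn : G.Connected)
    (hdegpos : ∀ v : V, 0 < G.degree v)
    (f : V → V → ℝ) (hdiag : ∀ x, f x x = 0)
    (hrec : ∀ x y, x ≠ y →
      f x y = (((G.degree x : ℝ) + G.degree y))⁻¹ *
        ((∑ j ∈ G.neighborFinset x, f j y) + ∑ j ∈ G.neighborFinset y, f j x)) :
    ∀ x y : V, f x y ≤ 0 := by
  classical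
  obtain ⟨p, -, hp⟩ := Finset.exists_max_image (Finset.univ : Finset (V × V))
    (fun p => f p.1 p.2) ⟨(Classical.arbitrary V, Classical.arbitrary V), Finset.mem_univ _⟩
  set c : ℝ := f p.1 p.2 with hc
  have hle : ∀ x y : V, f x y ≤ c := fun x y => hp (x, y) (Finset.mem_univ _)
  -- key rigidity: at a max point off the diagonal, all "neighbor" values equal c
  have key : ∀ a b : V, a ≠ b → f a b = c → ∀ j ∈ G.neighborFinset a, f j b = c := by
    intro a b hab hfab
    have hD : (0 : ℝ) < (G.degree a : ℝ) + G.degree b := by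
      have := hdegpos a; have := hdegpos b; positivity
    have hT : (∑ j ∈ G.neighborFinset a, f j b) + ∑ j ∈ G.neighborFinset b, f j a
        = ((G.degree a : ℝ) + G.degree b) * c := by
      have h := hrec a b hab
      rw [hfab] at h
      field_simp at h
      linarith [h]
    have hs1 : (0:ℝ) ≤ ∑ j ∈ G.neighborFinset a, (c - f j b) :=
      Finset.sum_nonneg fun j _ => by linarith [hle j b]
    have hs2 : (0:ℝ) ≤ ∑ j ∈ G.neighborFinset b, (c - f j a) :=
      Finset.sum_nonneg fun j _ => by linarith [hle j a]
    have hsum : (∑ j ∈ G.neighborFinset a, (c - f j b))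
        + ∑ j ∈ G.neighborFinset b, (c - f j a) = 0 := by
      rw [Finset.sum_sub_distrib, Finset.sum_sub_distrib, Finset.sum_const,
        Finset.sum_const, G.card_neighborFinset_eq_degree, G.card_neighborFinset_eq_degree]
      simp only [nsmul_eq_mul]
      linarith [hT]
    have hs1z : ∑ j ∈ G.neighborFinset a, (c - f j b) = 0 := by linarith
    intro j hj
    have := (Finset.sum_eq_zero_iff_of_nonneg
      (fun j _ => by linarith [hle j b] : ∀ j ∈ G.neighborFinset a, (0:ℝ) ≤ c - f j b)).mp
      hs1z j hj
    linarith
  -- propagate the max to the diagonal along a walk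
  have prop : ∀ a b : V, ∀ _ : G.Walk a b, f a b = c → ∃ z, f z z = c := by
    intro a b q
    induction q with
    | nil => intro h; exact ⟨_, h⟩
    | @cons a j b hadj q ih =>
      intro hfab
      by_cases hab : a = b
      · subst hab; exact ⟨a, hfab⟩
      · exact ih (key a b hab hfab j (by rwa [SimpleGraph.mem_neighborFinset]))
  obtain ⟨z, hz⟩ := prop p.1 p.2 (hconn p.1 p.2).some hc.symm
  have : c = 0 := by rw [← hz, hdiag]
  intro x y; rw [← this]; exact hle x y

theorem stmt_19 {V : Type*} [Fintype V] [DecidableEq V]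
    (G : SimpleGraph V) [DecidableRel G.Adj] (hconn : G.Connected)
    (hcard : 2 ≤ Fintype.card V)
    (m : ℕ) (hm : m = G.edgeFinset.card)
    (hdeg : ∀ u v : V, G.Adj u v → G.degree u + G.degree v ≤ m)
    (M HZ : V → V → ℝ) (w : V)
    (hH0 : ∀ x, HZ x x = 0)
    (hsymw : ∀ y, HZ y w = HZ w y)
    (hMdiag : ∀ x, M x x = 0)
    (hMrec : ∀ x y, x ≠ y →
      M x y = (m : ℝ) / ((G.degree x : ℝ) + G.degree y)
        + (((G.degree x : ℝ) + G.degree y))⁻¹ *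
          ((∑ j ∈ G.neighborFinset x, M j y) + ∑ j ∈ G.neighborFinset y, M j x))
    (hSrec : ∀ x y, x ≠ y →
      (HZ x y + HZ y w - HZ w y) / 2 = (m : ℝ) / ((G.degree x : ℝ) + G.degree y)
        + (((G.degree x : ℝ) + G.degree y))⁻¹ *
          ((∑ j ∈ G.neighborFinset x, (HZ j y + HZ y w - HZ w y) / 2)
            + ∑ j ∈ G.neighborFinset y, (HZ j x + HZ x w - HZ w x) / 2)) :
    ∀ x y : V, M x y = (HZ x y + HZ y w - HZ w y) / 2 ∧ M x y = HZ x y / 2 := by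
  classical
  have : Nonempty V := Fintype.card_pos_iff.mp (by omega)
  -- positive degrees
  have hdegpos : ∀ v : V, 0 < G.degree v := by
    intro v
    rw [G.degree_pos_iff_exists_adj]
    obtain ⟨u, hu⟩ := Fintype.exists_ne_of_one_lt_card (by omega) v
    obtain ⟨q⟩ := hconn v u
    cases q with
    | nil => exact absurd rfl (Ne.symm hu)
    | cons h q => exact ⟨_, h⟩
  -- S(x,y) = HZ x y / 2
  have hS : ∀ x y : V, (HZ x y + HZ y w - HZ w y) / 2 = HZ x y / 2 := by
    intro x y; rw [hsymw y]; ring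
  -- the difference is harmonic with diagonal boundary 0
  set f : V → V → ℝ := fun x y => M x y - HZ x y / 2 with hf
  have hdiag : ∀ x, f x x = 0 := by intro x; simp [hf, hMdiag, hH0]
  have hrec : ∀ x y, x ≠ y →
      f x y = (((G.degree x : ℝ) + G.degree y))⁻¹ *
        ((∑ j ∈ G.neighborFinset x, f j y) + ∑ j ∈ G.neighborFinset y, f j x) := by
    intro x y hxy
    have h1 := hMrec x y hxy
    have h2 := hSrec x y hxy
    simp only [hS] at h2
    simp only [hf, Finset.sum_sub_distrib]
    rw [h1, h2]
    ring
  have h1 := harmonic_nonpos G hconn hdegpos f hdiag hrec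
  have h2 := harmonic_nonpos G hconn hdegpos (fun x y => -f x y)
    (fun x => by simp [hdiag]) (by
      intro x y hxy
      simp only [Finset.sum_neg_distrib]
      rw [hrec x y hxy]; ring)
  have hzero : ∀ x y : V, f x y = 0 := by
    intro x y
    have := h1 x y; have := h2 x y
    linarith
  intro x y
  have hfx : M x y = HZ x y / 2 := by have := hzero x y; simp only [hf] at this; linarith
  exact ⟨by rw [hS x y]; exact hfx, hfx⟩
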